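/- Let p be a prime, k ≥ 2, e_1, ..., e_k ≥ 0 integers, and b_1, b'_1, ..., b_k, b'_k ∈ Z. Then Σ_{c_1=1}^{p^{e_1}} ... Σ_{c_k=1}^{p^{e_k}} Π_{i=1}^{k-1} |c_i p^{b_i} + c_{i+1} p^{b'_{i+1}}|_p^{-1/2} ≤ A_k · (Π_{i=1}^{k} max(e_i, 1)) · p^{Σ_{i=1}^{k} e_i + (1/2) Σ_{i=1}^{k-1} min(b_i, b'_{i+1})} for a constant A_k depending only on k. -/

import Mathlib

open Finset

section PartI
variable (p : ℕ) [hp : Fact p.Prime]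

lemma count_multiples (n d : ℕ) :
    ((Finset.Icc 1 n).filter (fun y => d ∣ y)).card = n / d := by
  have h : Finset.Icc 1 n = Finset.Ioc 0 n := rfl
  rw [h]
  exact Nat.Ioc_filter_dvd_card_eq_div n d

-- counting lemma
lemma count_dvd_le (e e' β j : ℕ) :
    (((((Finset.Icc 1 (p^e)) ×ˢ (Finset.Icc 1 (p^e'))).filter
      (fun cc : ℕ × ℕ => p^j ∣ cc.1 * p^β + cc.2)).card : ℝ))
      ≤ 2 * (p:ℝ)^(e+e') / (p:ℝ)^j := by
  have hp1 : 1 < p := hp.out.one_lt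
  have hp0 : 0 < p := hp.out.pos
  have hpR : (0:ℝ) < (p:ℝ) := by exact_mod_cast hp0
  have hpjR : (0:ℝ) < (p:ℝ)^j := pow_pos hpR j
  rcases le_or_gt j β with hjβ | hβj
  · -- j ≤ β : then p^j ∣ c', count ≤ p^e * (p^e'/p^j)
    have hsub : (((Finset.Icc 1 (p^e)) ×ˢ (Finset.Icc 1 (p^e'))).filter
        (fun cc : ℕ × ℕ => p^j ∣ cc.1 * p^β + cc.2)) ⊆
        (Finset.Icc 1 (p^e)) ×ˢ ((Finset.Icc 1 (p^e')).filter (fun y => p^j ∣ y)) := by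
      intro cc hcc
      simp only [Finset.mem_filter, Finset.mem_product] at hcc ⊢
      refine ⟨hcc.1.1, hcc.1.2, ?_⟩
      have h1 : p^j ∣ cc.1 * p^β := Dvd.dvd.mul_left (pow_dvd_pow p hjβ) _
      have := Nat.dvd_sub hcc.2 h1
      simpa using this
    have hcard := Finset.card_le_card hsub
    rw [Finset.card_product, count_multiples] at hcard
    calc ((((Finset.Icc 1 (p^e)) ×ˢ (Finset.Icc 1 (p^e'))).filter
        (fun cc : ℕ × ℕ => p^j ∣ cc.1 * p^β + cc.2)).card : ℝ)
        ≤ ((p^e * (p^e' / p^j) : ℕ) : ℝ) := by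
          rw [Nat.card_Icc] at hcard
          simp only [Nat.add_sub_cancel] at hcard
          exact_mod_cast hcard
      _ ≤ (p:ℝ)^e * ((p:ℝ)^e' / (p:ℝ)^j) := by
          push_cast
          refine mul_le_mul_of_nonneg_left ?_ (by positivity)
          calc ((p^e' / p^j : ℕ) : ℝ) ≤ ((p^e' : ℕ):ℝ) / ((p^j : ℕ):ℝ) := Nat.cast_div_le
            _ = (p:ℝ)^e' / (p:ℝ)^j := by push_cast; ring
      _ ≤ 2 * (p:ℝ)^(e+e') / (p:ℝ)^j := by
          rw [pow_add, mul_div_assoc, mul_div_assoc, ← mul_assoc]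
          refine mul_le_mul_of_nonneg_right ?_ (le_of_lt (div_pos (pow_pos hpR e') hpjR))
          nlinarith [pow_pos hpR e]
  · -- β < j
    rcases lt_or_ge e' β with he'β | hβe'
    · -- β > e' : empty
      have : (((Finset.Icc 1 (p^e)) ×ˢ (Finset.Icc 1 (p^e'))).filter
          (fun cc : ℕ × ℕ => p^j ∣ cc.1 * p^β + cc.2)) = ∅ := by
        rw [Finset.eq_empty_iff_forall_notMem]
        intro cc hcc
        simp only [Finset.mem_filter, Finset.mem_product, Finset.mem_Icc] at hcc
        have h1 : p^β ∣ cc.1 * p^β := dvd_mul_left _ _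
        have h2 : p^β ∣ cc.1 * p^β + cc.2 := dvd_trans (pow_dvd_pow p hβj.le) hcc.2
        have h3 : p^β ∣ cc.2 := by
          have := Nat.dvd_sub h2 h1
          simpa using this
        have h4 : p^β ≤ cc.2 := Nat.le_of_dvd (by omega) h3
        have h5 : p^e' < p^β := Nat.pow_lt_pow_right hp1 he'β
        omega
      rw [this]
      simp
      positivity
    · -- β ≤ e', β < j : injection argument
      set M : ℕ := (p^(e+β) + p^e') / p^j with hM
      have key : ∀ cc : ℕ × ℕ, cc ∈ (((Finset.Icc 1 (p^e)) ×ˢ (Finset.Icc 1 (p^e'))).filter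
          (fun cc : ℕ × ℕ => p^j ∣ cc.1 * p^β + cc.2)) →
          ((cc.1 * p^β + cc.2) / p^j ∈ Finset.Icc 1 M ∧ p^β ∣ cc.2) := by
        intro cc hcc
        simp only [Finset.mem_filter, Finset.mem_product, Finset.mem_Icc] at hcc
        obtain ⟨⟨⟨hc1, hc2⟩, hc'1, hc'2⟩, hdvd⟩ := hcc
        constructor
        · rw [Finset.mem_Icc]
          constructor
          · have hs : p^j ≤ cc.1 * p^β + cc.2 := Nat.le_of_dvd (by positivity) hdvd
            exact Nat.one_le_div_iff (pow_pos hp0 j) |>.mpr hs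
          · apply Nat.div_le_div_right
            have : cc.1 * p^β ≤ p^(e+β) := by
              rw [pow_add]; exact Nat.mul_le_mul_right _ hc2
            omega
        · have h1 : p^β ∣ cc.1 * p^β := dvd_mul_left _ _
          have h2 : p^β ∣ cc.1 * p^β + cc.2 := dvd_trans (pow_dvd_pow p hβj.le) hdvd
          have := Nat.dvd_sub h2 h1
          simpa using this
      have hMR : (M:ℝ) ≤ ((p:ℝ)^(e+β) + (p:ℝ)^e') / (p:ℝ)^j := by
        calc (M:ℝ) ≤ ((p^(e+β) + p^e' : ℕ):ℝ) / ((p^j : ℕ):ℝ) := Nat.cast_div_le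
          _ = ((p:ℝ)^(e+β) + (p:ℝ)^e') / (p:ℝ)^j := by push_cast; ring
      rcases le_total (p^e) (p^(e' - β)) with hmin | hmin
      · -- inject (c,c') ↦ (s/p^j, c) into Icc 1 M ×ˢ Icc 1 (p^e)
        have hcard : (((Finset.Icc 1 (p^e)) ×ˢ (Finset.Icc 1 (p^e'))).filter
            (fun cc : ℕ × ℕ => p^j ∣ cc.1 * p^β + cc.2)).card
            ≤ ((Finset.Icc 1 M) ×ˢ (Finset.Icc 1 (p^e))).card := by
          apply Finset.card_le_card_of_injOn (fun cc => ((cc.1 * p^β + cc.2) / p^j, cc.1))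
          · intro cc hcc
            have hk := key cc hcc
            simp only [Finset.mem_coe, Finset.mem_filter, Finset.mem_product, Finset.mem_Icc] at hcc ⊢
            exact ⟨by simpa [Finset.mem_Icc] using hk.1, hcc.1.1.1, hcc.1.1.2⟩
          · intro a ha b hb hab
            simp only [Finset.coe_filter, Set.mem_setOf_eq, Finset.mem_product] at ha hb
            have h1 : a.1 = b.1 := congrArg Prod.snd hab
            have h2 : (a.1 * p^β + a.2) / p^j = (b.1 * p^β + b.2) / p^j :=
              congrArg Prod.fst hab
            have h3 : a.1 * p^β + a.2 = b.1 * p^β + b.2 := by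
              have da := Nat.div_mul_cancel ha.2
              have db := Nat.div_mul_cancel hb.2
              rw [← da, ← db, h2]
            have : a.2 = b.2 := by
              rw [h1] at h3; omega
            exact Prod.ext h1 this
        rw [Finset.card_product, Nat.card_Icc, Nat.card_Icc] at hcard
        simp only [Nat.add_sub_cancel] at hcard
        have he : e ≤ e' - β := by
          by_contra hcon
          push_neg at hcon
          exact absurd hmin (not_le.mpr (Nat.pow_lt_pow_right hp1 (by omega)))
        calc ((((Finset.Icc 1 (p^e)) ×ˢ (Finset.Icc 1 (p^e'))).filter
            (fun cc : ℕ × ℕ => p^j ∣ cc.1 * p^β + cc.2)).card : ℝ)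
            ≤ (M:ℝ) * (p:ℝ)^e := by exact_mod_cast hcard
          _ ≤ (((p:ℝ)^(e+β) + (p:ℝ)^e') / (p:ℝ)^j) * (p:ℝ)^e := by
              exact mul_le_mul_of_nonneg_right hMR (by positivity)
          _ ≤ 2 * (p:ℝ)^(e+e') / (p:ℝ)^j := by
              rw [div_mul_eq_mul_div, div_le_div_iff₀ hpjR hpjR]
              have h1 : (p:ℝ)^(e+β) * (p:ℝ)^e ≤ (p:ℝ)^(e+e') := by
                rw [← pow_add]
                apply pow_le_pow_right₀ (by exact_mod_cast hp1.le)
                omega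
              have h2 : (p:ℝ)^e' * (p:ℝ)^e ≤ (p:ℝ)^(e+e') := by
                rw [← pow_add]
                apply pow_le_pow_right₀ (by exact_mod_cast hp1.le)
                omega
              nlinarith [hpjR]
      · -- inject (c,c') ↦ (s/p^j, c.2/p^β) into Icc 1 M ×ˢ Icc 1 (p^(e'-β))
        have hcard : (((Finset.Icc 1 (p^e)) ×ˢ (Finset.Icc 1 (p^e'))).filter
            (fun cc : ℕ × ℕ => p^j ∣ cc.1 * p^β + cc.2)).card
            ≤ ((Finset.Icc 1 M) ×ˢ (Finset.Icc 1 (p^(e'-β)))).card := by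
          apply Finset.card_le_card_of_injOn
            (fun cc => ((cc.1 * p^β + cc.2) / p^j, cc.2 / p^β))
          · intro cc hcc
            have hk := key cc hcc
            simp only [Finset.mem_coe, Finset.mem_filter, Finset.mem_product, Finset.mem_Icc] at hcc ⊢
            refine ⟨by simpa [Finset.mem_Icc] using hk.1, ?_, ?_⟩
            · rw [Nat.one_le_div_iff (pow_pos hp0 β)]
              exact Nat.le_of_dvd (by omega) hk.2
            · rw [← Nat.pow_div hβe' hp0]
              exact Nat.div_le_div_right hcc.1.2.2
          · intro a ha b hb hab
            have hka := key a ha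
            have hkb := key b hb
            simp only [Finset.coe_filter, Set.mem_setOf_eq, Finset.mem_product] at ha hb
            have h2 : (a.1 * p^β + a.2) / p^j = (b.1 * p^β + b.2) / p^j :=
              congrArg Prod.fst hab
            have h2' : a.2 / p^β = b.2 / p^β := congrArg Prod.snd hab
            have h4 : a.2 = b.2 := by
              have da := Nat.div_mul_cancel hka.2
              have db := Nat.div_mul_cancel hkb.2
              rw [← da, ← db, h2']
            have h3 : a.1 * p^β + a.2 = b.1 * p^β + b.2 := by
              have da := Nat.div_mul_cancel ha.2
              have db := Nat.div_mul_cancel hb.2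
              rw [← da, ← db, h2]
            have h5 : a.1 = b.1 := by
              rw [h4] at h3
              have := Nat.add_right_cancel h3
              exact Nat.eq_of_mul_eq_mul_right (pow_pos hp0 β) this
            exact Prod.ext h5 h4
        rw [Finset.card_product, Nat.card_Icc, Nat.card_Icc] at hcard
        simp only [Nat.add_sub_cancel] at hcard
        have he : e' - β ≤ e := by
          by_contra hcon
          push_neg at hcon
          exact absurd hmin (not_le.mpr (Nat.pow_lt_pow_right hp1 (by omega)))
        calc ((((Finset.Icc 1 (p^e)) ×ˢ (Finset.Icc 1 (p^e'))).filter
            (fun cc : ℕ × ℕ => p^j ∣ cc.1 * p^β + cc.2)).card : ℝ)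
            ≤ (M:ℝ) * (p:ℝ)^(e'-β) := by exact_mod_cast hcard
          _ ≤ (((p:ℝ)^(e+β) + (p:ℝ)^e') / (p:ℝ)^j) * (p:ℝ)^(e'-β) := by
              exact mul_le_mul_of_nonneg_right hMR (by positivity)
          _ ≤ 2 * (p:ℝ)^(e+e') / (p:ℝ)^j := by
              rw [div_mul_eq_mul_div, div_le_div_iff₀ hpjR hpjR]
              have h1 : (p:ℝ)^(e+β) * (p:ℝ)^(e'-β) ≤ (p:ℝ)^(e+e') := by
                rw [← pow_add]
                apply pow_le_pow_right₀ (by exact_mod_cast hp1.le)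
                omega
              have h2 : (p:ℝ)^e' * (p:ℝ)^(e'-β) ≤ (p:ℝ)^(e+e') := by
                rw [← pow_add]
                apply pow_le_pow_right₀ (by exact_mod_cast hp1.le)
                omega
              nlinarith [hpjR]

end PartI

section PartIb
variable (p : ℕ) [hp : Fact p.Prime]

lemma val_le_cap (e e' β v : ℕ) (c c' : ℕ) (hc1 : 1 ≤ c) (hc2 : c ≤ p^e)
    (hc'1 : 1 ≤ c') (hc'2 : c' ≤ p^e') (hdvd : p^v ∣ c * p^β + c') :
    v ≤ e + e' + 1 := by
  have hp1 : 1 < p := hp.out.one_lt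
  have hp0 : 0 < p := hp.out.pos
  rcases le_or_gt v β with h | h
  · -- p^v ∣ c'
    have h1 : p^v ∣ c * p^β := Dvd.dvd.mul_left (pow_dvd_pow p h) _
    have h2 : p^v ∣ c' := by
      have := Nat.dvd_sub hdvd h1
      simpa using this
    have h3 : p^v ≤ c' := Nat.le_of_dvd (by omega) h2
    have : v ≤ e' := by
      by_contra hcon
      push_neg at hcon
      have := Nat.pow_lt_pow_right hp1 hcon
      omega
    omega
  · -- β < v
    have hβ1 : p^β ∣ p^v := pow_dvd_pow p h.le
    have h2 : p^β ∣ c' := by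
      have h1 : p^β ∣ c * p^β := dvd_mul_left _ _
      have := Nat.dvd_sub (dvd_trans hβ1 hdvd) h1
      simpa using this
    have h3 : p^β ≤ c' := Nat.le_of_dvd (by omega) h2
    have hβe' : β ≤ e' := by
      by_contra hcon
      push_neg at hcon
      have := Nat.pow_lt_pow_right hp1 hcon
      omega
    have hdeq : c' = (c' / p^β) * p^β := (Nat.div_mul_cancel h2).symm
    have hNeq : c * p^β + c' = (c + c' / p^β) * p^β := by
      nth_rewrite 1 [hdeq]; ring
    have hvsplit : p^β * p^(v-β) ∣ (c + c' / p^β) * p^β := by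
      rw [← pow_add]
      have hvb : β + (v - β) = v := by omega
      rw [hvb, ← hNeq]; exact hdvd
    have hsub : p^(v-β) ∣ c + c' / p^β := by
      rw [mul_comm (c + c' / p^β) (p^β)] at hvsplit
      exact (mul_dvd_mul_iff_left (show (p:ℕ)^β ≠ 0 by positivity)).mp hvsplit
    have hdle : c' / p^β ≤ p^(e'-β) := by
      rw [← Nat.pow_div hβe' hp0]
      exact Nat.div_le_div_right hc'2
    have hd1 : 1 ≤ c' / p^β := Nat.one_le_div_iff (pow_pos hp0 β) |>.mpr h3
    have hle : p^(v-β) ≤ c + c' / p^β := Nat.le_of_dvd (by omega) hsub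
    have h2p : p^e + p^(e'-β) ≤ p^(e + (e'-β) + 1) := by
      have h3' : p^(e + (e'-β) + 1) = p^e * p^(e'-β) * p := by ring
      have hxy1 : p^e ≤ p^e * p^(e'-β) :=
        Nat.le_mul_of_pos_right _ (pow_pos hp0 _)
      have hxy2 : p^(e'-β) ≤ p^e * p^(e'-β) :=
        Nat.le_mul_of_pos_left _ (pow_pos hp0 _)
      have h4 : p^e * p^(e'-β) * 2 ≤ p^e * p^(e'-β) * p := Nat.mul_le_mul_left _ (by omega)
      omega
    have : v - β ≤ e + (e'-β) + 1 := by
      by_contra hcon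
      push_neg at hcon
      have := Nat.pow_lt_pow_right hp1 hcon
      omega
    omega

lemma pair_sum_core (e e' β : ℕ) :
    ∑ c ∈ Finset.Icc 1 (p^e), ∑ c' ∈ Finset.Icc 1 (p^e'),
      (p:ℝ)^(padicValNat p (c * p^β + c'))
      ≤ 2 * (e+e'+2) * (p:ℝ)^(e+e') := by
  have hp1 : 1 < p := hp.out.one_lt
  have hp0 : 0 < p := hp.out.pos
  have hpR : (0:ℝ) < (p:ℝ) := by exact_mod_cast hp0
  have step1 : ∀ c ∈ Finset.Icc 1 (p^e), ∀ c' ∈ Finset.Icc 1 (p^e'),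
      (p:ℝ)^(padicValNat p (c * p^β + c'))
      ≤ ∑ j ∈ Finset.range (e+e'+2), (if p^j ∣ c * p^β + c' then (p:ℝ)^j else 0) := by
    intro c hc c' hc'
    simp only [Finset.mem_Icc] at hc hc'
    have hcap := val_le_cap p e e' β (padicValNat p (c * p^β + c')) c c'
      hc.1 hc.2 hc'.1 hc'.2 pow_padicValNat_dvd
    have hmem : padicValNat p (c * p^β + c') ∈ Finset.range (e+e'+2) := by
      simp only [Finset.mem_range]; omega
    have := Finset.single_le_sum (f := fun j => (if p^j ∣ c * p^β + c' then (p:ℝ)^j else 0))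
      (fun j _ => by positivity) hmem
    simpa [pow_padicValNat_dvd] using this
  calc ∑ c ∈ Finset.Icc 1 (p^e), ∑ c' ∈ Finset.Icc 1 (p^e'),
        (p:ℝ)^(padicValNat p (c * p^β + c'))
      ≤ ∑ c ∈ Finset.Icc 1 (p^e), ∑ c' ∈ Finset.Icc 1 (p^e'),
        ∑ j ∈ Finset.range (e+e'+2), (if p^j ∣ c * p^β + c' then (p:ℝ)^j else 0) := by
        apply Finset.sum_le_sum
        intro c hc
        exact Finset.sum_le_sum (fun c' hc' => step1 c hc c' hc')
    _ = ∑ j ∈ Finset.range (e+e'+2), ∑ cc ∈ (Finset.Icc 1 (p^e)) ×ˢ (Finset.Icc 1 (p^e')),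
        (if p^j ∣ cc.1 * p^β + cc.2 then (p:ℝ)^j else 0) := by
        rw [← Finset.sum_product']
        rw [Finset.sum_comm]
    _ = ∑ j ∈ Finset.range (e+e'+2),
        ((((Finset.Icc 1 (p^e)) ×ˢ (Finset.Icc 1 (p^e'))).filter
          (fun cc : ℕ × ℕ => p^j ∣ cc.1 * p^β + cc.2)).card : ℝ) * (p:ℝ)^j := by
        apply Finset.sum_congr rfl
        intro j _
        rw [← Finset.sum_filter, Finset.sum_const, nsmul_eq_mul]
    _ ≤ ∑ j ∈ Finset.range (e+e'+2), 2 * (p:ℝ)^(e+e') := by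
        apply Finset.sum_le_sum
        intro j _
        have hcount := count_dvd_le p e e' β j
        have hpj : (0:ℝ) < (p:ℝ)^j := pow_pos hpR j
        calc ((((Finset.Icc 1 (p^e)) ×ˢ (Finset.Icc 1 (p^e'))).filter
              (fun cc : ℕ × ℕ => p^j ∣ cc.1 * p^β + cc.2)).card : ℝ) * (p:ℝ)^j
            ≤ (2 * (p:ℝ)^(e+e') / (p:ℝ)^j) * (p:ℝ)^j :=
              mul_le_mul_of_nonneg_right hcount (by positivity)
          _ = 2 * (p:ℝ)^(e+e') := by field_simp
    _ = 2 * (e+e'+2) * (p:ℝ)^(e+e') := by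
        rw [Finset.sum_const, Finset.card_range]
        push_cast
        ring

end PartIb

section PartIc
variable (p : ℕ) [hp : Fact p.Prime]

lemma norm_natCast_inv (N : ℕ) (hN : N ≠ 0) :
    ‖(N : ℚ_[p])‖⁻¹ = (p:ℝ)^(padicValNat p N) := by
  have h0 : ((N:ℚ) : ℚ_[p]) = (N : ℚ_[p]) := by push_cast; ring
  rw [← h0, Padic.eq_padicNorm,
    padicNorm.eq_zpow_of_nonzero (by exact_mod_cast hN)]
  push_cast
  rw [zpow_neg, inv_inv, padicValRat.of_nat, zpow_natCast]

lemma aux_const (e e' : ℕ) : (2:ℝ) * (e+e'+2) ≤ 16 * (max e 1) * (max e' 1) := by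
  have h2 : (e:ℝ) + 1 ≤ 2 * max e 1 := by
    rcases Nat.eq_zero_or_pos e with h | h
    · subst h; simp
    · have : (1:ℝ) ≤ e := by exact_mod_cast h
      have hm : (max e 1 : ℕ) = e := by omega
      rw [hm]; linarith
  have h3 : (e':ℝ) + 1 ≤ 2 * max e' 1 := by
    rcases Nat.eq_zero_or_pos e' with h | h
    · subst h; simp
    · have : (1:ℝ) ≤ e' := by exact_mod_cast h
      have hm : (max e' 1 : ℕ) = e' := by omega
      rw [hm]; linarith
  have he : (0:ℝ) ≤ e := Nat.cast_nonneg e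
  have he' : (0:ℝ) ≤ e' := Nat.cast_nonneg e'
  have h1 : (2:ℝ) * (e+e'+2) ≤ 4 * ((e+1) * (e'+1)) := by nlinarith
  have h4 : (4:ℝ) * ((e+1)*(e'+1)) ≤ 4 * ((2*max e 1) * (2*max e' 1)) := by
    have := mul_le_mul h2 h3 (by positivity) (by positivity)
    linarith
  calc (2:ℝ) * (e+e'+2) ≤ 4 * ((e+1)*(e'+1)) := h1
    _ ≤ 4 * ((2*max e 1) * (2*max e' 1)) := h4
    _ = 16 * (max e 1) * (max e' 1) := by ring

lemma pair_norm_sum (e e' : ℕ) (b b' : ℤ) :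
    ∑ x ∈ Finset.Icc 1 (p^e), ∑ y ∈ Finset.Icc 1 (p^e'),
      ‖(x:ℚ_[p]) * (p:ℚ_[p])^b + (y:ℚ_[p]) * (p:ℚ_[p])^b'‖⁻¹
    ≤ 16 * (max e 1) * (max e' 1) * (p:ℝ)^(e+e') * (p:ℝ)^(min b b') := by
  have hp1 : 1 < p := hp.out.one_lt
  have hp0 : 0 < p := hp.out.pos
  have hpR : (0:ℝ) < (p:ℝ) := by exact_mod_cast hp0
  have hpQ : ((p:ℚ_[p])) ≠ 0 := by
    exact_mod_cast (Nat.cast_ne_zero (R := ℚ_[p])).mpr hp0.ne'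
  have hmaxe : (0:ℝ) < (max e 1 : ℕ) := by positivity
  rcases le_total b b' with hbb | hbb
  · -- min = b, β on y
    have hmin : min b b' = b := min_eq_left hbb
    set β : ℕ := (b' - b).toNat with hβ
    have hb' : b' = b + β := by omega
    have key : ∀ x ∈ Finset.Icc 1 (p^e), ∀ y ∈ Finset.Icc 1 (p^e'),
        ‖(x:ℚ_[p]) * (p:ℚ_[p])^b + (y:ℚ_[p]) * (p:ℚ_[p])^b'‖⁻¹
        = (p:ℝ)^(b) * (p:ℝ)^(padicValNat p (y * p^β + x)) := by
      intro x hx y hy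
      simp only [Finset.mem_Icc] at hx hy
      have hXeq : (x:ℚ_[p]) * (p:ℚ_[p])^b + (y:ℚ_[p]) * (p:ℚ_[p])^b'
          = (p:ℚ_[p])^b * ((y * p^β + x : ℕ) : ℚ_[p]) := by
        rw [hb', zpow_add₀ hpQ]
        push_cast
        rw [zpow_natCast]
        ring
      rw [hXeq, norm_mul, mul_inv, Padic.norm_p_zpow,
        norm_natCast_inv p _ (Nat.lt_of_lt_of_le hx.1 (Nat.le_add_left _ _)).ne']
      rw [← zpow_neg, neg_neg]
    rw [Finset.sum_congr rfl (fun x hx => Finset.sum_congr rfl (fun y hy => key x hx y hy))]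
    simp only [← Finset.mul_sum]
    have hswap : ∑ x ∈ Finset.Icc 1 (p^e), ∑ y ∈ Finset.Icc 1 (p^e'),
        (p:ℝ)^(padicValNat p (y * p^β + x))
        = ∑ y ∈ Finset.Icc 1 (p^e'), ∑ x ∈ Finset.Icc 1 (p^e),
        (p:ℝ)^(padicValNat p (y * p^β + x)) := Finset.sum_comm
    rw [hswap]
    have hcore := pair_sum_core p e' e β
    have hzb : (0:ℝ) < (p:ℝ)^b := zpow_pos hpR b
    calc (p:ℝ)^b * ∑ y ∈ Finset.Icc 1 (p^e'), ∑ x ∈ Finset.Icc 1 (p^e),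
          (p:ℝ)^(padicValNat p (y * p^β + x))
        ≤ (p:ℝ)^b * (2 * (e'+e+2) * (p:ℝ)^(e'+e)) :=
          mul_le_mul_of_nonneg_left hcore hzb.le
      _ ≤ (p:ℝ)^b * (16 * (max e 1) * (max e' 1) * (p:ℝ)^(e+e')) := by
          apply mul_le_mul_of_nonneg_left _ hzb.le
          have h1 : (2:ℝ) * (e'+e+2) ≤ 16 * (max e 1) * (max e' 1) := by
            have := aux_const e e'
            linarith
          have h2 : (p:ℝ)^(e'+e) = (p:ℝ)^(e+e') := by rw [add_comm]
          rw [h2]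
          exact mul_le_mul_of_nonneg_right h1 (by positivity)
      _ = 16 * (max e 1) * (max e' 1) * (p:ℝ)^(e+e') * (p:ℝ)^(min b b') := by
          rw [hmin]; ring
  · -- min = b', β on x
    have hmin : min b b' = b' := min_eq_right hbb
    set β : ℕ := (b - b').toNat with hβ
    have hb : b = b' + β := by omega
    have key : ∀ x ∈ Finset.Icc 1 (p^e), ∀ y ∈ Finset.Icc 1 (p^e'),
        ‖(x:ℚ_[p]) * (p:ℚ_[p])^b + (y:ℚ_[p]) * (p:ℚ_[p])^b'‖⁻¹
        = (p:ℝ)^(b') * (p:ℝ)^(padicValNat p (x * p^β + y)) := by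
      intro x hx y hy
      simp only [Finset.mem_Icc] at hx hy
      have hXeq : (x:ℚ_[p]) * (p:ℚ_[p])^b + (y:ℚ_[p]) * (p:ℚ_[p])^b'
          = (p:ℚ_[p])^b' * ((x * p^β + y : ℕ) : ℚ_[p]) := by
        rw [hb, zpow_add₀ hpQ]
        push_cast
        rw [zpow_natCast]
        ring
      rw [hXeq, norm_mul, mul_inv, Padic.norm_p_zpow,
        norm_natCast_inv p _ (Nat.lt_of_lt_of_le hy.1 (Nat.le_add_left _ _)).ne']
      rw [← zpow_neg, neg_neg]
    rw [Finset.sum_congr rfl (fun x hx => Finset.sum_congr rfl (fun y hy => key x hx y hy))]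
    simp only [← Finset.mul_sum]
    have hcore := pair_sum_core p e e' β
    have hzb : (0:ℝ) < (p:ℝ)^b' := zpow_pos hpR b'
    calc (p:ℝ)^b' * ∑ x ∈ Finset.Icc 1 (p^e), ∑ y ∈ Finset.Icc 1 (p^e'),
          (p:ℝ)^(padicValNat p (x * p^β + y))
        ≤ (p:ℝ)^b' * (2 * (e+e'+2) * (p:ℝ)^(e+e')) :=
          mul_le_mul_of_nonneg_left hcore hzb.le
      _ ≤ (p:ℝ)^b' * (16 * (max e 1) * (max e' 1) * (p:ℝ)^(e+e')) := by
          apply mul_le_mul_of_nonneg_left _ hzb.le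
          exact mul_le_mul_of_nonneg_right (aux_const e e') (by positivity)
      _ = 16 * (max e 1) * (max e' 1) * (p:ℝ)^(e+e') * (p:ℝ)^(min b b') := by
          rw [hmin]; ring

end PartIc
open Finset

section PartII

lemma sum_piFinset_zero (s : Fin 0 → Finset ℕ) (f : (Fin 0 → ℕ) → ℝ) :
    ∑ d ∈ Fintype.piFinset s, f d = f finZeroElim := by
  have h : Fintype.piFinset s = {finZeroElim} := by
    apply Finset.ext
    intro g
    simp only [Fintype.mem_piFinset, Finset.mem_singleton]
    constructor
    · intro _; funext i; exact i.elim0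
    · intro h i; exact i.elim0
  rw [h, Finset.sum_singleton]

lemma sum_piFinset_peel {n : ℕ} (t : Fin (n+1) → Finset ℕ) (f : (Fin (n+1) → ℕ) → ℝ) :
    ∑ c ∈ Fintype.piFinset t, f c
      = ∑ x ∈ t 0, ∑ d ∈ Fintype.piFinset (fun i : Fin n => t i.succ), f (Fin.cons x d) := by
  rw [← Finset.sum_product']
  apply Finset.sum_nbij' (i := fun c => ((c 0, Fin.tail c) : ℕ × (Fin n → ℕ)))
    (j := fun z => Fin.cons z.1 z.2)
  · intro c hc
    simp only [Fintype.mem_piFinset] at hc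
    simp only [Finset.mem_product, Fintype.mem_piFinset]
    exact ⟨hc 0, fun i => hc i.succ⟩
  · intro z hz
    simp only [Finset.mem_product, Fintype.mem_piFinset] at hz
    simp only [Fintype.mem_piFinset]
    intro i
    refine Fin.cases ?_ ?_ i
    · simpa using hz.1
    · intro j; simpa using hz.2 j
  · intro c _; exact Fin.cons_self_tail c
  · intro z _; simp [Fin.tail_cons]
  · intro c _; exact congrArg f (Fin.cons_self_tail c).symm

noncomputable def RA : ℕ → (ℕ → ℝ) → (ℕ → ℝ) → ℝ
  | 0, w, _ => w 0
  | 1, _, P => P 0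
  | (n+2), w, P => P 0 * RA n (fun j => w (j+2)) (fun i => P (i+2))

noncomputable def RB : ℕ → (ℕ → ℝ) → (ℕ → ℝ) → ℝ
  | 0, w, _ => w 0
  | (n+1), w, P => w 0 * RA n (fun j => w (j+1)) (fun i => P (i+1))

lemma LA : ∀ (n : ℕ) (t : ℕ → Finset ℕ) (F : ℕ → ℕ → ℕ → ℝ),
    ∑ c ∈ Fintype.piFinset (fun i : Fin (n+1) => t i.val),
      ∏ i : Fin n, (if i.val % 2 = 0 then F i.val (c i.castSucc) (c i.succ) else 1)
    = RA n (fun j => ((t j).card : ℝ)) (fun i => ∑ x ∈ t i, ∑ y ∈ t (i+1), F i x y) := by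
  intro n
  induction n using Nat.strong_induction_on with
  | _ n ih =>
    match n with
    | 0 =>
      intro t F
      rw [sum_piFinset_peel]
      simp only [sum_piFinset_zero]
      simp [RA]
    | 1 =>
      intro t F
      rw [sum_piFinset_peel]
      simp only [sum_piFinset_peel, sum_piFinset_zero]
      simp only [RA]
      apply Finset.sum_congr rfl
      intro x _
      apply Finset.sum_congr rfl
      intro y _
      simp [Fin.cons_zero, Fin.cons_succ]
    | (m+2) =>
      intro t F
      rw [sum_piFinset_peel]
      have hstep : ∀ x, x ∈ t 0 →
          (∑ d ∈ Fintype.piFinset (fun i : Fin (m+2) => t ((i.succ : Fin (m+3)).val)),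
            ∏ i : Fin (m+2), (if i.val % 2 = 0 then
              F i.val ((Fin.cons x d : Fin (m+3) → ℕ) i.castSucc)
                ((Fin.cons x d : Fin (m+3) → ℕ) i.succ) else 1))
          = (∑ y ∈ t 1, F 0 x y) *
            RA m (fun j => ((t (j+2)).card : ℝ))
              (fun i => ∑ u ∈ t (i+2), ∑ v ∈ t (i+3), F (i+2) u v) := by
        intro x _
        rw [sum_piFinset_peel]
        simp only [Fin.succ_zero_eq_one, Fin.val_one]
        rw [Finset.sum_mul]
        apply Finset.sum_congr rfl
        intro y _
        have hinner : ∀ d' ∈ Fintype.piFinset (fun i : Fin (m+1) => t (i.val + 2)),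
            (∏ i : Fin (m+2), (if i.val % 2 = 0 then
              F i.val ((Fin.cons x (Fin.cons y d') : Fin (m+3) → ℕ) i.castSucc)
                ((Fin.cons x (Fin.cons y d') : Fin (m+3) → ℕ) i.succ) else 1))
            = F 0 x y * ∏ i : Fin m, (if i.val % 2 = 0 then
                F (i.val + 2) (d' i.castSucc) (d' i.succ) else 1) := by
          intro d' _
          have hadd : ∀ a : ℕ, a + 1 + 1 = a + 2 := fun a => rfl
          rw [Fin.prod_univ_succ, Fin.prod_univ_succ]
          simp only [Fin.val_succ, Fin.val_zero, ← Fin.succ_castSucc, Fin.castSucc_zero,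
            Fin.cons_zero, Fin.cons_succ, hadd, Nat.add_mod_right]
          norm_num
        have hadd : ∀ a : ℕ, a + 1 + 1 = a + 2 := fun a => rfl
        simp only [Fin.val_succ, hadd]
        rw [Finset.sum_congr rfl hinner, ← Finset.mul_sum]
        congr 1
        exact ih m (by omega) (fun j => t (j+2)) (fun i => F (i+2))
      simp only [Fin.val_zero]
      rw [Finset.sum_congr rfl hstep, ← Finset.sum_mul]
      rfl

lemma LB : ∀ (n : ℕ) (t : ℕ → Finset ℕ) (F : ℕ → ℕ → ℕ → ℝ),
    ∑ c ∈ Fintype.piFinset (fun i : Fin (n+1) => t i.val),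
      ∏ i : Fin n, (if i.val % 2 = 1 then F i.val (c i.castSucc) (c i.succ) else 1)
    = RB n (fun j => ((t j).card : ℝ)) (fun i => ∑ x ∈ t i, ∑ y ∈ t (i+1), F i x y) := by
  intro n
  match n with
  | 0 =>
    intro t F
    rw [sum_piFinset_peel]
    simp only [sum_piFinset_zero]
    simp [RB]
  | (m+1) =>
    intro t F
    rw [sum_piFinset_peel]
    have hstep : ∀ x, x ∈ t 0 →
        (∑ d ∈ Fintype.piFinset (fun i : Fin (m+1) => t ((i.succ : Fin (m+2)).val)),
          ∏ i : Fin (m+1), (if i.val % 2 = 1 then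
            F i.val ((Fin.cons x d : Fin (m+2) → ℕ) i.castSucc)
              ((Fin.cons x d : Fin (m+2) → ℕ) i.succ) else 1))
        = RA m (fun j => ((t (j+1)).card : ℝ))
            (fun i => ∑ u ∈ t (i+1), ∑ v ∈ t (i+2), F (i+1) u v) := by
      intro x _
      have hinner : ∀ d ∈ Fintype.piFinset (fun i : Fin (m+1) => t (i.val + 1)),
          (∏ i : Fin (m+1), (if i.val % 2 = 1 then
            F i.val ((Fin.cons x d : Fin (m+2) → ℕ) i.castSucc)
              ((Fin.cons x d : Fin (m+2) → ℕ) i.succ) else 1))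
          = ∏ i : Fin m, (if i.val % 2 = 0 then
              F (i.val + 1) (d i.castSucc) (d i.succ) else 1) := by
        intro d _
        rw [Fin.prod_univ_succ]
        simp only [Fin.val_succ, Fin.val_zero, ← Fin.succ_castSucc, Fin.castSucc_zero,
          Fin.cons_zero, Fin.cons_succ, Nat.succ_mod_two_eq_one_iff]
        norm_num
      simp only [Fin.val_succ]
      rw [Finset.sum_congr rfl hinner]
      exact LA m (fun j => t (j+1)) (fun i => F (i+1))
    simp only [Fin.val_zero]
    rw [Finset.sum_congr rfl hstep, Finset.sum_const, nsmul_eq_mul]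
    rfl

lemma RA_nonneg : ∀ (n : ℕ) (w P : ℕ → ℝ), (∀ j, 0 ≤ w j) → (∀ i, 0 ≤ P i) →
    0 ≤ RA n w P := by
  intro n
  induction n using Nat.strong_induction_on with
  | _ n ih =>
    match n with
    | 0 => intro w P hw hP; exact hw 0
    | 1 => intro w P hw hP; exact hP 0
    | (m+2) =>
      intro w P hw hP
      exact mul_nonneg (hP 0) (ih m (by omega) _ _ (fun j => hw _) (fun i => hP _))

lemma RA_le : ∀ (n : ℕ) (w P κ μ : ℕ → ℝ),
    (∀ j, 0 ≤ w j) → (∀ j, w j ≤ κ j) → (∀ i, 0 ≤ P i) →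
    (∀ i, P i ≤ κ i * κ (i+1) * μ i) → (∀ j, 0 ≤ κ j) → (∀ i, 0 < μ i) →
    RA n w P ≤ (∏ j ∈ Finset.range (n+1), κ j) *
      (∏ i ∈ Finset.range n, (if i % 2 = 0 then μ i else 1)) := by
  intro n
  induction n using Nat.strong_induction_on with
  | _ n ih =>
    match n with
    | 0 =>
      intro w P κ μ hw0 hw hP0 hP hκ hμ
      simpa [RA] using hw 0
    | 1 =>
      intro w P κ μ hw0 hw hP0 hP hκ hμ
      simp only [RA]
      calc P 0 ≤ κ 0 * κ 1 * μ 0 := hP 0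
        _ = (∏ j ∈ Finset.range 2, κ j) * (∏ i ∈ Finset.range 1, (if i % 2 = 0 then μ i else 1)) := by
          rw [Finset.prod_range_succ, Finset.prod_range_succ, Finset.prod_range_one]
          norm_num
    | (m+2) =>
      intro w P κ μ hw0 hw hP0 hP hκ hμ
      have hIH := ih m (by omega) (fun j => w (j+2)) (fun i => P (i+2))
        (fun j => κ (j+2)) (fun i => μ (i+2))
        (fun j => hw0 _) (fun j => hw _) (fun i => hP0 _)
        (fun i => by simpa [add_assoc] using hP (i+2)) (fun j => hκ _) (fun i => hμ _)
      have hRA0 := RA_nonneg m (fun j => w (j+2)) (fun i => P (i+2))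
        (fun j => hw0 _) (fun i => hP0 _)
      have step : RA (m+2) w P = P 0 * RA m (fun j => w (j+2)) (fun i => P (i+2)) := rfl
      rw [step]
      have h1 : P 0 * RA m (fun j => w (j+2)) (fun i => P (i+2))
          ≤ (κ 0 * κ 1 * μ 0) * ((∏ j ∈ Finset.range (m+1), κ (j+2)) *
            (∏ i ∈ Finset.range m, (if i % 2 = 0 then μ (i+2) else 1))) := by
        exact mul_le_mul (hP 0) hIH hRA0 (mul_nonneg (mul_nonneg (hκ 0) (hκ 1)) (hμ 0).le)
      refine h1.trans (le_of_eq ?_)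
      have hκprod : ∏ j ∈ Finset.range (m+3), κ j
          = (∏ j ∈ Finset.range (m+1), κ (j+2)) * κ 1 * κ 0 := by
        rw [Finset.prod_range_succ' (fun j => κ j) (m+2)]
        rw [Finset.prod_range_succ' (fun j => κ (j+1)) (m+1)]
      have hμprod : ∏ i ∈ Finset.range (m+2), (if i % 2 = 0 then μ i else 1)
          = (∏ i ∈ Finset.range m, (if i % 2 = 0 then μ (i+2) else 1)) * 1 * μ 0 := by
        rw [Finset.prod_range_succ' (fun i => if i % 2 = 0 then μ i else 1) (m+1)]
        rw [Finset.prod_range_succ' (fun i => if (i+1) % 2 = 0 then μ (i+1) else 1) m]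
        simp only [Nat.add_mod_right, add_assoc]
        norm_num
      rw [hκprod, hμprod]
      ring

lemma RB_le : ∀ (n : ℕ) (w P κ μ : ℕ → ℝ),
    (∀ j, 0 ≤ w j) → (∀ j, w j ≤ κ j) → (∀ i, 0 ≤ P i) →
    (∀ i, P i ≤ κ i * κ (i+1) * μ i) → (∀ j, 0 ≤ κ j) → (∀ i, 0 < μ i) →
    RB n w P ≤ (∏ j ∈ Finset.range (n+1), κ j) *
      (∏ i ∈ Finset.range n, (if i % 2 = 1 then μ i else 1)) := by
  intro n
  match n with
  | 0 =>
    intro w P κ μ hw0 hw hP0 hP hκ hμ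
    simpa [RB] using hw 0
  | (m+1) =>
    intro w P κ μ hw0 hw hP0 hP hκ hμ
    have hIH := RA_le m (fun j => w (j+1)) (fun i => P (i+1))
      (fun j => κ (j+1)) (fun i => μ (i+1))
      (fun j => hw0 _) (fun j => hw _) (fun i => hP0 _)
      (fun i => by simpa [add_assoc] using hP (i+1)) (fun j => hκ _) (fun i => hμ _)
    have hRA0 := RA_nonneg m (fun j => w (j+1)) (fun i => P (i+1))
      (fun j => hw0 _) (fun i => hP0 _)
    have step : RB (m+1) w P = w 0 * RA m (fun j => w (j+1)) (fun i => P (i+1)) := rfl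
    rw [step]
    have h1 : w 0 * RA m (fun j => w (j+1)) (fun i => P (i+1))
        ≤ κ 0 * ((∏ j ∈ Finset.range (m+1), κ (j+1)) *
          (∏ i ∈ Finset.range m, (if i % 2 = 0 then μ (i+1) else 1))) := by
      exact mul_le_mul (hw 0) hIH hRA0 (hκ 0)
    refine h1.trans (le_of_eq ?_)
    have hκprod : ∏ j ∈ Finset.range (m+2), κ j
        = (∏ j ∈ Finset.range (m+1), κ (j+1)) * κ 0 := by
      rw [Finset.prod_range_succ' (fun j => κ j) (m+1)]
    have hμprod : ∏ i ∈ Finset.range (m+1), (if i % 2 = 1 then μ i else 1)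
        = (∏ i ∈ Finset.range m, (if i % 2 = 0 then μ (i+1) else 1)) * 1 := by
      rw [Finset.prod_range_succ' (fun i => if i % 2 = 1 then μ i else 1) m]
      simp only [Nat.succ_mod_two_eq_one_iff]
      norm_num
    rw [hκprod, hμprod]
    ring

end PartII
section Assembly

lemma prod_sqrt {ι : Type*} (s : Finset ι) (f : ι → ℝ) (h : ∀ i ∈ s, 0 ≤ f i) :
    ∏ i ∈ s, Real.sqrt (f i) = Real.sqrt (∏ i ∈ s, f i) := by
  induction s using Finset.cons_induction with
  | empty => simp
  | cons a s ha ih =>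
    rw [Finset.prod_cons, Finset.prod_cons, Real.sqrt_mul (h a (Finset.mem_cons_self a s)),
      ih (fun i hi => h i (Finset.mem_cons.mpr (Or.inr hi)))]

lemma sqrt_mul_le_weighted (a b θ : ℝ) (ha : 0 ≤ a) (hb : 0 ≤ b) (hθ : 0 < θ) :
    Real.sqrt (a * b) ≤ (θ⁻¹ * a + θ * b) / 2 := by
  have h1 : Real.sqrt (θ⁻¹ * a) * Real.sqrt (θ * b) = Real.sqrt (a * b) := by
    rw [← Real.sqrt_mul (by positivity)]
    congr 1
    field_simp
  nlinarith [sq_nonneg (Real.sqrt (θ⁻¹ * a) - Real.sqrt (θ * b)),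
    Real.sq_sqrt (mul_nonneg (inv_nonneg.mpr hθ.le) ha),
    Real.sq_sqrt (mul_nonneg hθ.le hb), h1,
    Real.sqrt_nonneg (a*b)]

lemma rpow_neg_half_eq_sqrt_inv (a : ℝ) (ha : 0 ≤ a) :
    a ^ (-(1/2) : ℝ) = Real.sqrt a⁻¹ := by
  rw [Real.rpow_neg ha, ← Real.sqrt_eq_rpow, Real.sqrt_inv]

lemma prod_zpow_ite (x : ℝ) (hx : x ≠ 0) (r : ℕ) (M : ℕ → ℤ) : ∀ (n : ℕ),
    ∏ i ∈ Finset.range n, (if i % 2 = r then x ^ (M i) else 1)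
      = x ^ (∑ i ∈ Finset.range n, if i % 2 = r then M i else 0) := by
  intro n
  induction n with
  | zero => simp
  | succ m ih =>
    rw [Finset.prod_range_succ, Finset.sum_range_succ, ih, zpow_add₀ hx]
    congr 1
    by_cases h : m % 2 = r <;> simp [h]

end Assembly

open scoped BigOperators

/-- Lemma 3 of the paper: for k = K+2 ≥ 2 variables, the nested sum of products of
p-adic absolute values is bounded by A_k · (Π max(e_i,1)) · p^{Σ e_i + ½ Σ min(b_i, b'_{i+1})}. -/
theorem nested_weil_sum_bound (K : ℕ) :
    ∃ A : ℝ, 0 < A ∧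
      ∀ (p : ℕ) [Fact p.Prime] (e : Fin (K + 2) → ℕ) (b b' : Fin (K + 2) → ℤ),
        (∑ c ∈ Fintype.piFinset (fun i : Fin (K + 2) => Finset.Icc 1 (p ^ e i)),
            ∏ i : Fin (K + 1),
              ‖(c i.castSucc : ℚ_[p]) * (p : ℚ_[p]) ^ (b i.castSucc) +
                (c i.succ : ℚ_[p]) * (p : ℚ_[p]) ^ (b' i.succ)‖ ^ (-(1 / 2) : ℝ)) ≤
          A * (∏ i : Fin (K + 2), (max (e i) 1 : ℝ)) *
            (p : ℝ) ^ ((∑ i : Fin (K + 2), (e i : ℝ)) +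
              (1 / 2) * ∑ i : Fin (K + 1), (min (b i.castSucc) (b' i.succ) : ℝ)) := by
  refine ⟨16 ^ (K+2), by positivity, ?_⟩
  intro p hpF e b b'
  have hp1 : 1 < p := hpF.out.one_lt
  have hp0 : 0 < p := hpF.out.pos
  have hpR : (0:ℝ) < (p:ℝ) := by exact_mod_cast hp0
  have hpRne : (p:ℝ) ≠ 0 := hpR.ne'
  set en : ℕ → ℕ := fun j => if h : j < K+2 then e ⟨j,h⟩ else 0 with hen_def
  set bn : ℕ → ℤ := fun j => if h : j < K+2 then b ⟨j,h⟩ else 0 with hbn_def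
  set b'n : ℕ → ℤ := fun j => if h : j < K+2 then b' ⟨j,h⟩ else 0 with hb'n_def
  set t : ℕ → Finset ℕ := fun j => Finset.Icc 1 (p ^ en j) with ht_def
  set F : ℕ → ℕ → ℕ → ℝ :=
    fun i x y => ‖(x:ℚ_[p]) * (p:ℚ_[p])^(bn i) + (y:ℚ_[p]) * (p:ℚ_[p])^(b'n (i+1))‖⁻¹
    with hF_def
  set M : ℕ → ℤ := fun i => min (bn i) (b'n (i+1)) with hM_def
  have hen : ∀ i : Fin (K+2), en i.val = e i := by
    intro i
    simp only [hen_def, i.isLt, dif_pos, Fin.eta]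
  have hbn : ∀ i : Fin (K+1), bn i.val = b i.castSucc := by
    intro i
    have h : i.val < K+2 := by omega
    simp only [hbn_def, h, dif_pos]
    congr 1
  have hb'n : ∀ i : Fin (K+1), b'n (i.val + 1) = b' i.succ := by
    intro i
    have h : i.val + 1 < K+2 := by omega
    simp only [hb'n_def, h, dif_pos]
    congr 1
  -- parity sums of the mins
  set Se : ℤ := ∑ i ∈ Finset.range (K+1), (if i % 2 = 0 then M i else 0) with hSe_def
  set So : ℤ := ∑ i ∈ Finset.range (K+1), (if i % 2 = 1 then M i else 0) with hSo_def
  set θ : ℝ := (p:ℝ) ^ ((((Se - So : ℤ)):ℝ)/2) with hθ_def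
  have hθ : 0 < θ := Real.rpow_pos_of_pos hpR _
  -- pointwise AM-GM bound
  have point : ∀ c ∈ Fintype.piFinset (fun i : Fin (K+2) => Finset.Icc 1 (p ^ e i)),
      (∏ i : Fin (K+1), ‖(c i.castSucc : ℚ_[p]) * (p:ℚ_[p])^(b i.castSucc) +
          (c i.succ : ℚ_[p]) * (p:ℚ_[p])^(b' i.succ)‖ ^ (-(1/2) : ℝ))
      ≤ (θ⁻¹ * ∏ i : Fin (K+1), (if i.val % 2 = 0 then F i.val (c i.castSucc) (c i.succ) else 1)
        + θ * ∏ i : Fin (K+1), (if i.val % 2 = 1 then F i.val (c i.castSucc) (c i.succ) else 1)) / 2 := by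
    intro c _
    have hTnn : ∀ i : Fin (K+1), 0 ≤ F i.val (c i.castSucc) (c i.succ) := by
      intro i
      simp only [hF_def]
      positivity
    have hterm : ∀ i : Fin (K+1), ‖(c i.castSucc : ℚ_[p]) * (p:ℚ_[p])^(b i.castSucc) +
        (c i.succ : ℚ_[p]) * (p:ℚ_[p])^(b' i.succ)‖ ^ (-(1/2):ℝ)
        = Real.sqrt (F i.val (c i.castSucc) (c i.succ)) := by
      intro i
      rw [rpow_neg_half_eq_sqrt_inv _ (norm_nonneg _)]
      simp only [hF_def]
      rw [← hbn i, ← hb'n i]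
    rw [Finset.prod_congr rfl (fun i _ => hterm i)]
    rw [prod_sqrt Finset.univ _ (fun i _ => hTnn i)]
    have hsplit : (∏ i : Fin (K+1), F i.val (c i.castSucc) (c i.succ))
        = (∏ i : Fin (K+1), (if i.val % 2 = 0 then F i.val (c i.castSucc) (c i.succ) else 1))
        * (∏ i : Fin (K+1), (if i.val % 2 = 1 then F i.val (c i.castSucc) (c i.succ) else 1)) := by
      rw [← Finset.prod_mul_distrib]
      apply Finset.prod_congr rfl
      intro i _
      rcases Nat.mod_two_eq_zero_or_one i.val with h | h <;> simp [h]
    rw [hsplit]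
    exact sqrt_mul_le_weighted _ _ θ
      (Finset.prod_nonneg (fun i _ => by
        rcases Nat.mod_two_eq_zero_or_one i.val with h | h <;> simp [h, hTnn i]))
      (Finset.prod_nonneg (fun i _ => by
        rcases Nat.mod_two_eq_zero_or_one i.val with h | h <;> simp [h, hTnn i])) hθ
  -- replace index family by ℕ-indexed version
  have hsetEq : (fun i : Fin (K+2) => Finset.Icc 1 (p ^ e i))
      = (fun i : Fin (K+1+1) => t i.val) := by
    funext i
    simp only [ht_def, hen i]
  -- the two parity sums
  have hE := LA (K+1) t F
  have hO := LB (K+1) t F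
  -- bounds on card and pair sums
  set κ : ℕ → ℝ := fun j => 16 * (max ((en j):ℝ) 1) * (p:ℝ)^(en j) with hκ_def
  set μ : ℕ → ℝ := fun i => (p:ℝ)^(M i) with hμ_def
  have hmax1 : ∀ j, (1:ℝ) ≤ max ((en j):ℝ) 1 := fun j => le_max_right _ _
  have hmax0 : ∀ j, (0:ℝ) < max ((en j):ℝ) 1 := fun j => lt_of_lt_of_le one_pos (hmax1 j)
  have hκpos : ∀ j, (0:ℝ) < κ j := by
    intro j
    simp only [hκ_def]
    positivity
  have hw0 : ∀ j, (0:ℝ) ≤ ((t j).card : ℝ) := fun j => Nat.cast_nonneg _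
  have hcard : ∀ j, ((t j).card : ℝ) = (p:ℝ)^(en j) := by
    intro j
    simp only [ht_def, Nat.card_Icc, Nat.add_sub_cancel]
    push_cast
    ring
  have hw : ∀ j, ((t j).card : ℝ) ≤ κ j := by
    intro j
    rw [hcard j]
    simp only [hκ_def]
    nlinarith [pow_pos hpR (en j), hmax1 j]
  have hP0 : ∀ i, (0:ℝ) ≤ ∑ x ∈ t i, ∑ y ∈ t (i+1), F i x y := by
    intro i
    apply Finset.sum_nonneg
    intro x _
    apply Finset.sum_nonneg
    intro y _
    simp only [hF_def]
    positivity
  have hμpos : ∀ i, (0:ℝ) < μ i := fun i => zpow_pos hpR _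
  have hP : ∀ i, (∑ x ∈ t i, ∑ y ∈ t (i+1), F i x y) ≤ κ i * κ (i+1) * μ i := by
    intro i
    have hpair := pair_norm_sum p (en i) (en (i+1)) (bn i) (b'n (i+1))
    calc (∑ x ∈ t i, ∑ y ∈ t (i+1), F i x y)
        ≤ 16 * (max ((en i):ℝ) 1) * (max ((en (i+1)):ℝ) 1)
          * (p:ℝ)^(en i + en (i+1)) * (p:ℝ)^(min (bn i) (b'n (i+1))) := by
          simp only [ht_def, hF_def]
          convert hpair using 4
          · norm_cast
          · norm_cast
      _ ≤ κ i * κ (i+1) * μ i := by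
          simp only [hκ_def, hμ_def, hM_def, pow_add]
          have h1 : (0:ℝ) < (p:ℝ)^(en i) := pow_pos hpR _
          have h2 : (0:ℝ) < (p:ℝ)^(en (i+1)) := pow_pos hpR _
          have h3 : (0:ℝ) < (p:ℝ)^(min (bn i) (b'n (i+1))) := zpow_pos hpR _
          nlinarith [hmax0 i, hmax0 (i+1), hmax1 i, hmax1 (i+1),
            mul_pos (mul_pos h1 h2) h3,
            mul_pos (mul_pos (hmax0 i) (hmax0 (i+1))) (mul_pos (mul_pos h1 h2) h3)]
  have hEbound := RA_le (K+1) (fun j => ((t j).card : ℝ))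
    (fun i => ∑ x ∈ t i, ∑ y ∈ t (i+1), F i x y) κ μ
    hw0 hw hP0 hP (fun j => (hκpos j).le) hμpos
  have hObound := RB_le (K+1) (fun j => ((t j).card : ℝ))
    (fun i => ∑ x ∈ t i, ∑ y ∈ t (i+1), F i x y) κ μ
    hw0 hw hP0 hP (fun j => (hκpos j).le) hμpos
  -- μ products
  have hμE : ∏ i ∈ Finset.range (K+1), (if i % 2 = 0 then μ i else 1) = (p:ℝ)^Se := by
    simp only [hμ_def]
    rw [prod_zpow_ite _ hpRne 0 M (K+1)]
  have hμO : ∏ i ∈ Finset.range (K+1), (if i % 2 = 1 then μ i else 1) = (p:ℝ)^So := by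
    simp only [hμ_def]
    rw [prod_zpow_ite _ hpRne 1 M (K+1)]
  set DD : ℝ := ∏ j ∈ Finset.range (K+2), κ j with hDD_def
  set EN : ℕ := ∑ j ∈ Finset.range (K+2), en j with hEN_def
  have hD : DD = 16^(K+2) * (∏ i : Fin (K+2), (max ((e i):ℝ) 1)) * (p:ℝ)^EN := by
    rw [hDD_def, hκ_def]
    rw [Finset.prod_mul_distrib, Finset.prod_mul_distrib, Finset.prod_const,
      Finset.card_range, Finset.prod_pow_eq_pow_sum]
    congr 1
    · congr 1
      rw [← Fin.prod_univ_eq_prod_range (fun j => max ((en j):ℝ) 1) (K+2)]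
      exact Finset.prod_congr rfl (fun i _ => by rw [hen i])
  have hMi : ∀ i : Fin (K+1), M i.val = min (b i.castSucc) (b' i.succ) := by
    intro i
    simp only [hM_def]
    rw [hbn i, hb'n i]
  have hsum_min : ∑ i : Fin (K+1), (min (b i.castSucc) (b' i.succ) : ℝ)
      = ((Se + So : ℤ) : ℝ) := by
    have h1 : Se + So = ∑ i ∈ Finset.range (K+1), M i := by
      rw [hSe_def, hSo_def, ← Finset.sum_add_distrib]
      apply Finset.sum_congr rfl
      intro i _
      rcases Nat.mod_two_eq_zero_or_one i with h | h <;> simp [h]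
    rw [h1, ← Fin.sum_univ_eq_sum_range (fun j => M j) (K+1)]
    push_cast
    apply Finset.sum_congr rfl
    intro i _
    rw [hMi i, Int.cast_min]
  have hENr : (EN:ℝ) = ∑ i : Fin (K+2), ((e i):ℝ) := by
    rw [hEN_def]
    push_cast
    rw [← Fin.sum_univ_eq_sum_range (fun j => ((en j):ℝ)) (K+2)]
    exact Finset.sum_congr rfl (fun i _ => by rw [hen i])
  have hEle : (∑ c ∈ Fintype.piFinset (fun i : Fin (K+2) => Finset.Icc 1 (p ^ e i)),
      ∏ i : Fin (K+1), (if i.val % 2 = 0 then F i.val (c i.castSucc) (c i.succ) else 1))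
      ≤ DD * (p:ℝ)^Se := by
    calc (∑ c ∈ Fintype.piFinset (fun i : Fin (K+2) => Finset.Icc 1 (p ^ e i)),
        ∏ i : Fin (K+1), (if i.val % 2 = 0 then F i.val (c i.castSucc) (c i.succ) else 1))
        = RA (K+1) (fun j => ((t j).card : ℝ))
            (fun i => ∑ x ∈ t i, ∑ y ∈ t (i+1), F i x y) := by rw [hsetEq]; exact hE
      _ ≤ DD * ∏ i ∈ Finset.range (K+1), (if i % 2 = 0 then μ i else 1) := hEbound
      _ = DD * (p:ℝ)^Se := by rw [hμE]
  have hOle : (∑ c ∈ Fintype.piFinset (fun i : Fin (K+2) => Finset.Icc 1 (p ^ e i)),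
      ∏ i : Fin (K+1), (if i.val % 2 = 1 then F i.val (c i.castSucc) (c i.succ) else 1))
      ≤ DD * (p:ℝ)^So := by
    calc (∑ c ∈ Fintype.piFinset (fun i : Fin (K+2) => Finset.Icc 1 (p ^ e i)),
        ∏ i : Fin (K+1), (if i.val % 2 = 1 then F i.val (c i.castSucc) (c i.succ) else 1))
        = RB (K+1) (fun j => ((t j).card : ℝ))
            (fun i => ∑ x ∈ t i, ∑ y ∈ t (i+1), F i x y) := by rw [hsetEq]; exact hO
      _ ≤ DD * ∏ i ∈ Finset.range (K+1), (if i % 2 = 1 then μ i else 1) := hObound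
      _ = DD * (p:ℝ)^So := by rw [hμO]
  have hDD0 : 0 ≤ DD := Finset.prod_nonneg (fun j _ => (hκpos j).le)
  -- rpow gymnastics
  have hθinvSe : θ⁻¹ * (p:ℝ)^Se = (p:ℝ) ^ ((((Se + So : ℤ)):ℝ)/2) := by
    have h1 : θ⁻¹ = (p:ℝ) ^ (-((((Se - So : ℤ)):ℝ)/2)) := by
      rw [hθ_def, ← Real.rpow_neg hpR.le]
    have h2 : ((p:ℝ)^Se : ℝ) = (p:ℝ) ^ ((Se:ℝ)) := (Real.rpow_intCast _ _).symm
    rw [h1, h2, ← Real.rpow_add hpR]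
    congr 1
    push_cast
    ring
  have hθSo : θ * (p:ℝ)^So = (p:ℝ) ^ ((((Se + So : ℤ)):ℝ)/2) := by
    have h2 : ((p:ℝ)^So : ℝ) = (p:ℝ) ^ ((So:ℝ)) := (Real.rpow_intCast _ _).symm
    rw [hθ_def, h2, ← Real.rpow_add hpR]
    congr 1
    push_cast
    ring
  -- main chain
  calc (∑ c ∈ Fintype.piFinset (fun i : Fin (K + 2) => Finset.Icc 1 (p ^ e i)),
        ∏ i : Fin (K + 1),
          ‖(c i.castSucc : ℚ_[p]) * (p : ℚ_[p]) ^ (b i.castSucc) +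
            (c i.succ : ℚ_[p]) * (p : ℚ_[p]) ^ (b' i.succ)‖ ^ (-(1 / 2) : ℝ))
      ≤ ∑ c ∈ Fintype.piFinset (fun i : Fin (K + 2) => Finset.Icc 1 (p ^ e i)),
        (θ⁻¹ * ∏ i : Fin (K+1), (if i.val % 2 = 0 then F i.val (c i.castSucc) (c i.succ) else 1)
          + θ * ∏ i : Fin (K+1), (if i.val % 2 = 1 then F i.val (c i.castSucc) (c i.succ) else 1)) / 2 :=
        Finset.sum_le_sum point
    _ = (θ⁻¹ * (∑ c ∈ Fintype.piFinset (fun i : Fin (K + 2) => Finset.Icc 1 (p ^ e i)),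
          ∏ i : Fin (K+1), (if i.val % 2 = 0 then F i.val (c i.castSucc) (c i.succ) else 1))
        + θ * (∑ c ∈ Fintype.piFinset (fun i : Fin (K + 2) => Finset.Icc 1 (p ^ e i)),
          ∏ i : Fin (K+1), (if i.val % 2 = 1 then F i.val (c i.castSucc) (c i.succ) else 1))) / 2 := by
        rw [← Finset.sum_div, Finset.sum_add_distrib, ← Finset.mul_sum, ← Finset.mul_sum]
    _ ≤ (θ⁻¹ * (DD * (p:ℝ)^Se) + θ * (DD * (p:ℝ)^So)) / 2 := by
        have ha := mul_le_mul_of_nonneg_left hEle (inv_nonneg.mpr hθ.le)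
        have hb := mul_le_mul_of_nonneg_left hOle hθ.le
        linarith
    _ = DD * (p:ℝ) ^ ((((Se + So : ℤ)):ℝ)/2) := by
        have h1 : θ⁻¹ * (DD * (p:ℝ)^Se) = DD * (θ⁻¹ * (p:ℝ)^Se) := by ring
        have h2 : θ * (DD * (p:ℝ)^So) = DD * (θ * (p:ℝ)^So) := by ring
        rw [h1, h2, hθinvSe, hθSo]
        ring
    _ = 16 ^ (K + 2) * (∏ i : Fin (K + 2), (max (e i) 1 : ℝ)) *
        (p : ℝ) ^ ((∑ i : Fin (K + 2), (e i : ℝ)) +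
          (1 / 2) * ∑ i : Fin (K + 1), (min (b i.castSucc) (b' i.succ) : ℝ)) := by
        rw [hD]
        have h3 : ((p:ℝ)^EN : ℝ) = (p:ℝ) ^ ((EN:ℝ)) := (Real.rpow_natCast _ _).symm
        rw [h3, mul_assoc, ← Real.rpow_add hpR]
        congr 2
        rw [hENr, ← hsum_min]
        ring
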